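/- The ring ℂ{{z}} of Gevrey series of order 1, consisting of formal power series Σ_{k≥0} a_k z^k with a_k ∈ ℂ such that there exist constants C₁, C₂ > 0 with |a_k| ≤ C₁ C₂^k k! for all k, is a local ring: a Gevrey series of order 1 is invertible in ℂ{{z}} if and only if its constant term a₀ is nonzero. -/

import Mathlib

/-- A formal power series `Σ a_k z^k ∈ ℂ[[z]]` is a Gevrey series of order 1 iff
there are constants `C₁, C₂ > 0` with `|a_k| ≤ C₁ C₂^k k!` for all `k`. -/
def Gevrey1 (x : PowerSeries ℂ) : Prop :=
  ∃ C₁ C₂ : ℝ, 0 < C₁ ∧ 0 < C₂ ∧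
    ∀ k : ℕ, ‖PowerSeries.coeff k x‖ ≤ C₁ * C₂ ^ k * k.factorial

lemma fact_mul_fact_le (i j : ℕ) : (i.factorial : ℝ) * j.factorial ≤ (i + j).factorial := by
  have h := Nat.factorial_mul_factorial_dvd_factorial_add i j
  exact_mod_cast Nat.le_of_dvd (Nat.factorial_pos _) h

lemma gevrey1_mul (x y : PowerSeries ℂ) (hx : Gevrey1 x) (hy : Gevrey1 y) :
    Gevrey1 (x * y) := by
  obtain ⟨C₁, C₂, hC₁, hC₂, hCx⟩ := hx
  obtain ⟨D₁, D₂, hD₁, hD₂, hDy⟩ := hy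
  set E := max C₂ D₂ with hE
  have hEpos : 0 < E := lt_of_lt_of_le hC₂ (le_max_left _ _)
  refine ⟨C₁ * D₁, 2 * E, mul_pos hC₁ hD₁, by positivity, fun n => ?_⟩
  rw [PowerSeries.coeff_mul]
  calc ‖∑ p ∈ Finset.HasAntidiagonal.antidiagonal n,
        PowerSeries.coeff p.1 x * PowerSeries.coeff p.2 y‖
      ≤ ∑ p ∈ Finset.HasAntidiagonal.antidiagonal n,
        ‖PowerSeries.coeff p.1 x * PowerSeries.coeff p.2 y‖ := by
        exact norm_sum_le _ _
    _ ≤ ∑ _p ∈ Finset.HasAntidiagonal.antidiagonal n, C₁ * D₁ * E ^ n * n.factorial := by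
        refine Finset.sum_le_sum fun p hp => ?_
        rw [Finset.HasAntidiagonal.mem_antidiagonal] at hp
        rw [norm_mul]
        have h1 := hCx p.1
        have h2 := hDy p.2
        have := mul_le_mul h1 h2 (norm_nonneg _) (by positivity)
        refine this.trans ?_
        have hpow : C₂ ^ p.1 * D₂ ^ p.2 ≤ E ^ n := by
          rw [← hp, pow_add]
          exact mul_le_mul (pow_le_pow_left₀ hC₂.le (le_max_left _ _) _)
            (pow_le_pow_left₀ hD₂.le (le_max_right _ _) _) (by positivity) (by positivity)
        have hfac : (p.1.factorial : ℝ) * p.2.factorial ≤ n.factorial := by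
          rw [← hp]; exact fact_mul_fact_le _ _
        calc C₁ * C₂ ^ p.1 * p.1.factorial * (D₁ * D₂ ^ p.2 * p.2.factorial)
            = C₁ * D₁ * (C₂ ^ p.1 * D₂ ^ p.2) * ((p.1.factorial : ℝ) * p.2.factorial) := by ring
          _ ≤ C₁ * D₁ * E ^ n * n.factorial := by
              exact mul_le_mul (mul_le_mul_of_nonneg_left hpow (by positivity)) hfac
                (by positivity) (by positivity)
    _ = (n + 1 : ℝ) * (C₁ * D₁ * E ^ n * n.factorial) := by
        rw [Finset.sum_const, Finset.Nat.card_antidiagonal, nsmul_eq_mul]; push_cast; ring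
    _ ≤ (2 : ℝ) ^ n * (C₁ * D₁ * E ^ n * n.factorial) := by
        have : (n + 1 : ℝ) ≤ 2 ^ n := by exact_mod_cast Nat.succ_le_of_lt (Nat.lt_two_pow_self : n < 2 ^ n)
        exact mul_le_mul_of_nonneg_right this (by positivity)
    _ = C₁ * D₁ * (2 * E) ^ n * n.factorial := by rw [mul_pow]; ring

lemma gevrey1_inv (x : PowerSeries ℂ) (hx0 : PowerSeries.constantCoeff x ≠ 0)
    (hx : Gevrey1 x) : Gevrey1 x⁻¹ := by
  obtain ⟨C₁, C₂, hC₁, hC₂, hCx⟩ := hx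
  set A : ℝ := ‖PowerSeries.constantCoeff x‖⁻¹ with hA
  have hApos : 0 < A := by
    rw [hA]; exact inv_pos.mpr (by simpa using hx0)
  set T : ℝ := max 1 (2 * C₁ * A) with hT
  have hT1 : (1 : ℝ) ≤ T := le_max_left _ _
  have hTpos : 0 < T := lt_of_lt_of_le one_pos hT1
  set K : ℝ := 2 * C₂ * T with hK
  have hKpos : 0 < K := by positivity
  refine ⟨A, K, hApos, hKpos, fun n => ?_⟩
  induction n using Nat.strong_induction_on with
  | _ n ih =>
    rw [PowerSeries.coeff_inv]
    rcases Nat.eq_zero_or_pos n with rfl | hn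
    · simp only [if_pos rfl, norm_inv]
      simp [← hA]
    · rw [if_neg hn.ne']
      rw [norm_mul, norm_neg, norm_inv, ← hA]
      have key : ‖∑ p ∈ Finset.HasAntidiagonal.antidiagonal n,
          if p.2 < n then PowerSeries.coeff p.1 x * PowerSeries.coeff p.2 x⁻¹ else 0‖
          ≤ ∑ p ∈ Finset.HasAntidiagonal.antidiagonal n, C₁ * A * K ^ n * n.factorial / T * (1/2) ^ p.1 := by
        refine (norm_sum_le _ _).trans (Finset.sum_le_sum fun p hp => ?_)
        rw [Finset.HasAntidiagonal.mem_antidiagonal] at hp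
        by_cases hp2 : p.2 < n
        · rw [if_pos hp2, norm_mul]
          have hp1 : 1 ≤ p.1 := by omega
          have h1 := hCx p.1
          have h2 := ih p.2 (by omega)
          have hmul := mul_le_mul h1 h2 (norm_nonneg _) (by positivity)
          refine hmul.trans ?_
          have hfac : (p.1.factorial : ℝ) * p.2.factorial ≤ n.factorial := by
            rw [← hp]; exact fact_mul_fact_le _ _
          have hpow : C₂ ^ p.1 * K ^ p.2 ≤ K ^ n * (1/2) ^ p.1 / T := by
            have hC2K : C₂ = K * (1 / (2 * T)) := by
              rw [hK]; field_simp
            have heq : C₂ ^ p.1 * K ^ p.2 = K ^ n * (1 / (2 * T)) ^ p.1 := by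
              rw [hC2K, mul_pow, ← hp, pow_add]; ring
            have hle : (1 / (2 * T) : ℝ) ^ p.1 ≤ (1/2) ^ p.1 / T := by
              have h2T : (1 / (2 * T) : ℝ) = (1/2) * T⁻¹ := by field_simp
              rw [h2T, mul_pow, div_eq_mul_inv]
              refine mul_le_mul_of_nonneg_left ?_ (by positivity)
              calc (T⁻¹ : ℝ) ^ p.1 ≤ T⁻¹ ^ 1 :=
                    pow_le_pow_of_le_one (by positivity) (inv_le_one_of_one_le₀ hT1) hp1
                _ = T⁻¹ := pow_one _
            rw [heq, mul_div_assoc]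
            exact mul_le_mul_of_nonneg_left hle (by positivity)
          calc C₁ * C₂ ^ p.1 * p.1.factorial * (A * K ^ p.2 * p.2.factorial)
              = C₁ * A * (C₂ ^ p.1 * K ^ p.2) * ((p.1.factorial : ℝ) * p.2.factorial) := by ring
            _ ≤ C₁ * A * (K ^ n * (1/2) ^ p.1 / T) * n.factorial :=
                mul_le_mul (mul_le_mul_of_nonneg_left hpow (by positivity)) hfac
                  (by positivity) (by positivity)
            _ = C₁ * A * K ^ n * n.factorial / T * (1/2) ^ p.1 := by ring
        · rw [if_neg hp2]; simp only [norm_zero]; positivity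
      have sumbound : ∑ p ∈ Finset.HasAntidiagonal.antidiagonal n,
          C₁ * A * K ^ n * n.factorial / T * (1/2) ^ p.1
          ≤ C₁ * A * K ^ n * n.factorial / T * 2 := by
        rw [← Finset.mul_sum]
        rw [Finset.Nat.sum_antidiagonal_eq_sum_range_succ (fun i _ => ((1:ℝ)/2) ^ i)]
        exact mul_le_mul_of_nonneg_left (sum_geometric_two_le _) (by positivity)
      calc A * ‖∑ p ∈ Finset.HasAntidiagonal.antidiagonal n,
            if p.2 < n then PowerSeries.coeff p.1 x * PowerSeries.coeff p.2 x⁻¹ else 0‖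
          ≤ A * (C₁ * A * K ^ n * n.factorial / T * 2) :=
            mul_le_mul_of_nonneg_left (key.trans sumbound) hApos.le
        _ ≤ A * K ^ n * n.factorial := by
            have hfrac : 2 * C₁ * A / T ≤ 1 := by
              rw [div_le_one hTpos]; exact le_max_right _ _
            have : A * (C₁ * A * K ^ n * n.factorial / T * 2)
                = (2 * C₁ * A / T) * (A * K ^ n * n.factorial) := by ring
            rw [this]
            calc (2 * C₁ * A / T) * (A * K ^ n * n.factorial)
                ≤ 1 * (A * K ^ n * n.factorial) :=
                  mul_le_mul_of_nonneg_right hfrac (by positivity)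
              _ = A * K ^ n * n.factorial := one_mul _

/-- The ring `ℂ{{z}}` of Gevrey series of order 1 is a subring of `ℂ[[z]]`
(closed under the Cauchy product) and is a local ring: a Gevrey series of order 1
is invertible in `ℂ{{z}}` if and only if its constant term is nonzero. -/
theorem gevrey1_localRing :
    (∀ x y : PowerSeries ℂ, Gevrey1 x → Gevrey1 y → Gevrey1 (x * y)) ∧
    (∀ x : PowerSeries ℂ, Gevrey1 x →
      ((∃ y : PowerSeries ℂ, Gevrey1 y ∧ x * y = 1) ↔ PowerSeries.coeff 0 x ≠ 0)) := by
  constructor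
  · exact gevrey1_mul
  · intro x hx
    constructor
    · rintro ⟨y, _, hxy⟩ h0
      have := congrArg (PowerSeries.constantCoeff) hxy
      rw [map_mul, map_one] at this
      rw [PowerSeries.coeff_zero_eq_constantCoeff] at h0
      rw [h0, zero_mul] at this
      exact zero_ne_one this
    · intro h0
      rw [PowerSeries.coeff_zero_eq_constantCoeff] at h0
      exact ⟨x⁻¹, gevrey1_inv x h0 hx, PowerSeries.mul_inv_cancel x h0⟩
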